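/- Let X, W be proper metric spaces, π : X → W continuous, Y a metric space, f : X → Y continuous, K ⊆ X compact, and α > 0. Then the set E_α = {a ∈ W : ℋ^α(f(π⁻¹(a) ∩ K)) > 0} is a countable union of compact subsets of W. More precisely, for each n ∈ ℕ, the set E_α(n) = {a ∈ W : ℋ^α_∞(f(π⁻¹(a) ∩ K)) ≥ 1/n} is closed, and E_α = ⋃_n E_α(n). -/

import Mathlib

open MeasureTheory Metric
open scoped ENNReal NNReal Topology
open Filter

/-- The `α`-dimensional Hausdorff content of a set in a metric space. -/
noncomputable def hausdorffContent {Y : Type*} [EMetricSpace Y] (α : ℝ) (S : Set Y) : ℝ≥0∞ :=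
  ⨅ (t : ℕ → Set Y) (_ : S ⊆ ⋃ n, t n), ∑' n, EMetric.diam (t n) ^ α

section Aux

variable {Y : Type*} [MetricSpace Y]

lemma hausdorffContent_le {α : ℝ} {S : Set Y} (t : ℕ → Set Y) (ht : S ⊆ ⋃ n, t n) :
    hausdorffContent α S ≤ ∑' n, EMetric.diam (t n) ^ α :=
  iInf₂_le t ht

lemma exists_cover_of_content_lt {α : ℝ} {S : Set Y} {c : ℝ≥0∞}
    (h : hausdorffContent α S < c) :
    ∃ t : ℕ → Set Y, (S ⊆ ⋃ n, t n) ∧ ∑' n, EMetric.diam (t n) ^ α < c := by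
  simpa only [hausdorffContent, iInf_lt_iff, exists_prop] using h

lemma hausdorffContent_le_hausdorffMeasure [MeasurableSpace Y] [BorelSpace Y]
    {α : ℝ} (hα : 0 < α) (S : Set Y) :
    hausdorffContent α S ≤ μH[α] S := by
  rw [Measure.hausdorffMeasure_apply]
  refine le_trans ?_ (le_iSup₂ (f := fun (r : ℝ≥0∞) (_ : 0 < r) =>
    ⨅ (t : ℕ → Set Y) (_ : S ⊆ ⋃ n, t n) (_ : ∀ n, EMetric.diam (t n) ≤ r),
      ∑' n, ⨆ _ : (t n).Nonempty, EMetric.diam (t n) ^ α) 1 one_pos)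
  refine le_iInf₂ fun t ht => le_iInf fun _ => ?_
  refine (hausdorffContent_le t ht).trans (ENNReal.tsum_le_tsum fun n => ?_)
  rcases (t n).eq_empty_or_nonempty with h | h
  · simp [h, EMetric.diam, ENNReal.zero_rpow_of_pos hα]
  · simp [h]

lemma hausdorffMeasure_eq_zero_of_content [MeasurableSpace Y] [BorelSpace Y]
    {α : ℝ} (hα : 0 < α) {S : Set Y} (h : hausdorffContent α S = 0) :
    μH[α] S = 0 := by
  rw [← nonpos_iff_eq_zero, Measure.hausdorffMeasure_apply]
  refine iSup₂_le fun r hr => ?_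
  refine ENNReal.le_of_forall_pos_le_add fun ε hε _ => ?_
  rw [zero_add]
  have hrα : (0 : ℝ≥0∞) < r ^ α := by
    rw [pos_iff_ne_zero]
    intro h0
    rcases ENNReal.rpow_eq_zero_iff.1 h0 with ⟨h1, _⟩ | ⟨_, h2⟩
    · exact hr.ne' h1
    · exact absurd hα (not_lt.2 h2.le)
  have hmin : (0 : ℝ≥0∞) < min (ε : ℝ≥0∞) (r ^ α) :=
    lt_min (ENNReal.coe_pos.2 hε) hrα
  obtain ⟨t, ht, hsum⟩ := exists_cover_of_content_lt (h ▸ hmin)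
  have hdiam : ∀ n, EMetric.diam (t n) ≤ r := by
    intro n
    by_contra hcon
    push_neg at hcon
    have h1 : r ^ α ≤ EMetric.diam (t n) ^ α := ENNReal.rpow_le_rpow hcon.le hα.le
    have h2 : EMetric.diam (t n) ^ α ≤ ∑' m, EMetric.diam (t m) ^ α :=
      ENNReal.le_tsum n
    exact absurd ((h1.trans h2).trans_lt (hsum.trans_le (min_le_right _ _)))
      (lt_irrefl _)
  refine le_trans (le_trans (iInf₂_le t ht) (iInf_le _ hdiam)) ?_
  refine le_trans (ENNReal.tsum_le_tsum fun n => iSup_le fun _ => le_rfl) ?_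
  exact (hsum.trans_le (min_le_left _ _)).le

lemma isOpen_content_lt {X W : Type*} [MetricSpace X] [MetricSpace W]
    (π : X → W) (hπ : Continuous π) (f : X → Y) (hf : Continuous f)
    (K : Set X) (hK : IsCompact K) {α : ℝ} (hα : 0 < α) {c : ℝ≥0∞} (hc : c ≠ ⊤) :
    IsOpen {a : W | hausdorffContent α (f '' (π ⁻¹' {a} ∩ K)) < c} := by
  rw [Metric.isOpen_iff]
  intro a ha
  obtain ⟨t, ht, hsum⟩ := exists_cover_of_content_lt ha
  have hsum_ne : (∑' n, EMetric.diam (t n) ^ α) ≠ ⊤ := (hsum.trans hc.lt_top).ne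
  obtain ⟨ε, hε, hεlt⟩ := ENNReal.lt_iff_exists_add_pos_lt.1 hsum
  obtain ⟨ε', hε', hε'sum⟩ := ENNReal.exists_pos_sum_of_countable
    (by exact_mod_cast hε.ne' : (ε : ℝ≥0∞) ≠ 0) ℕ
  -- choose thickening radii
  have hδ : ∀ i : ℕ, ∃ δ : ℝ≥0, 0 < δ ∧
      (EMetric.diam (t i) + 2 * (δ : ℝ≥0∞)) ^ α < EMetric.diam (t i) ^ α + ε' i := by
    intro i
    have hd : EMetric.diam (t i) ≠ ⊤ := by
      intro htop
      have h1 : EMetric.diam (t i) ^ α = ⊤ := by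
        rw [htop]; exact ENNReal.top_rpow_of_pos hα
      have h2 : EMetric.diam (t i) ^ α ≤ ∑' m, EMetric.diam (t m) ^ α :=
        ENNReal.le_tsum i
      rw [h1] at h2
      exact hsum_ne (top_le_iff.1 h2)
    have h3 : Filter.Tendsto (fun δ : ℝ≥0 => (2 : ℝ≥0∞) * (δ : ℝ≥0∞)) (𝓝[>] 0) (𝓝 0) := by
      have hcoe : Filter.Tendsto (fun δ : ℝ≥0 => (δ : ℝ≥0∞)) (𝓝[>] 0) (𝓝 0) := by
        simpa using (ENNReal.continuous_coe.tendsto 0).mono_left nhdsWithin_le_nhds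
      simpa using ENNReal.Tendsto.const_mul hcoe (Or.inr (by norm_num))
    have h1 : Filter.Tendsto (fun δ : ℝ≥0 => EMetric.diam (t i) + 2 * (δ : ℝ≥0∞))
        (𝓝[>] 0) (𝓝 (EMetric.diam (t i))) := by
      simpa using tendsto_const_nhds.add h3
    have hcont : Filter.Tendsto (fun δ : ℝ≥0 => (EMetric.diam (t i) + 2 * (δ : ℝ≥0∞)) ^ α)
        (𝓝[>] 0) (𝓝 (EMetric.diam (t i) ^ α)) :=
      (ENNReal.continuous_rpow_const.tendsto _).comp h1
    have hlt : EMetric.diam (t i) ^ α < EMetric.diam (t i) ^ α + ε' i :=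
      ENNReal.lt_add_right (ENNReal.rpow_ne_top_of_nonneg hα.le hd)
        (by exact_mod_cast (hε' i).ne')
    obtain ⟨δ, hδ1, hδ2⟩ := ((hcont.eventually_lt_const hlt).and self_mem_nhdsWithin).exists
    exact ⟨δ, hδ2, hδ1⟩
  choose δ hδpos hδlt using hδ
  set U : ℕ → Set Y := fun i => Metric.thickening (δ i) (t i) with hUdef
  have hUopen : ∀ i, IsOpen (U i) := fun i => Metric.isOpen_thickening
  have htU : ∀ i, t i ⊆ U i := fun i =>
    Metric.self_subset_thickening (by exact_mod_cast hδpos i) _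
  have hUdiam : ∀ i, EMetric.diam (U i) ^ α < EMetric.diam (t i) ^ α + ε' i := by
    intro i
    refine lt_of_le_of_lt (ENNReal.rpow_le_rpow ?_ hα.le) (hδlt i)
    exact Metric.ediam_thickening_le (δ i)
  -- compactness separation
  set C : Set X := K \ f ⁻¹' (⋃ i, U i) with hCdef
  have hC : IsCompact (π '' C) :=
    (hK.diff ((isOpen_iUnion hUopen).preimage hf)).image hπ
  have haC : a ∉ π '' C := by
    rintro ⟨x, ⟨hxK, hxU⟩, rfl⟩
    refine hxU ?_
    have hfx : f x ∈ f '' (π ⁻¹' {π x} ∩ K) := ⟨x, ⟨rfl, hxK⟩, rfl⟩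
    exact Set.iUnion_mono htU (ht hfx)
  obtain ⟨r, hr, hball⟩ := Metric.isOpen_iff.1 hC.isClosed.isOpen_compl a haC
  refine ⟨r, hr, fun a' ha' => ?_⟩
  show hausdorffContent α (f '' (π ⁻¹' {a'} ∩ K)) < c
  have hsub : f '' (π ⁻¹' {a'} ∩ K) ⊆ ⋃ i, U i := by
    rintro y ⟨x, ⟨hxa, hxK⟩, rfl⟩
    by_contra hy
    exact hball ha' ⟨x, ⟨hxK, hy⟩, hxa⟩
  calc hausdorffContent α (f '' (π ⁻¹' {a'} ∩ K))
      ≤ ∑' i, EMetric.diam (U i) ^ α := hausdorffContent_le U hsub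
    _ ≤ ∑' i, (EMetric.diam (t i) ^ α + ε' i) :=
        ENNReal.tsum_le_tsum fun i => (hUdiam i).le
    _ = (∑' i, EMetric.diam (t i) ^ α) + ∑' i, (ε' i : ℝ≥0∞) := ENNReal.tsum_add
    _ < (∑' i, EMetric.diam (t i) ^ α) + ε := ENNReal.add_lt_add_left hsum_ne hε'sum
    _ < c := hεlt

end Aux

/-- The set `E_α = {a ∈ W : ℋ^α(f(π⁻¹(a) ∩ K)) > 0}` is a countable union of compact sets:
each content-sublevel set `E_α(n)` is closed and `E_α = ⋃ₙ E_α(n)`. -/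
theorem exceptional_set_sigma_compact
    {X W Y : Type*} [MetricSpace X] [MetricSpace W] [MetricSpace Y]
    [ProperSpace X] [ProperSpace W] [MeasurableSpace Y] [BorelSpace Y]
    (π : X → W) (hπ : Continuous π) (f : X → Y) (hf : Continuous f)
    (K : Set X) (hK : IsCompact K) (α : ℝ) (hα : 0 < α) :
    (∀ n : ℕ, IsClosed {a : W |
        ((n : ℝ≥0∞) + 1)⁻¹ ≤ hausdorffContent α (f '' (π ⁻¹' {a} ∩ K))}) ∧
    {a : W | 0 < μH[α] (f '' (π ⁻¹' {a} ∩ K))} =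
      ⋃ n : ℕ, {a : W |
        ((n : ℝ≥0∞) + 1)⁻¹ ≤ hausdorffContent α (f '' (π ⁻¹' {a} ∩ K))} ∧
    ∃ F : ℕ → Set W, (∀ n, IsCompact (F n)) ∧
      {a : W | 0 < μH[α] (f '' (π ⁻¹' {a} ∩ K))} = ⋃ n, F n := by
  have hcpos : ∀ n : ℕ, (0 : ℝ≥0∞) < ((n : ℝ≥0∞) + 1)⁻¹ := fun n =>
    ENNReal.inv_pos.2 (by simp)
  have hclosed : ∀ n : ℕ, IsClosed {a : W |
      ((n : ℝ≥0∞) + 1)⁻¹ ≤ hausdorffContent α (f '' (π ⁻¹' {a} ∩ K))} := by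
    intro n
    have hopen := isOpen_content_lt π hπ f hf K hK hα
      (c := ((n : ℝ≥0∞) + 1)⁻¹) (ENNReal.inv_ne_top.2 (by simp))
    rw [← isOpen_compl_iff]
    have hcompl : {a : W | ((n : ℝ≥0∞) + 1)⁻¹ ≤
        hausdorffContent α (f '' (π ⁻¹' {a} ∩ K))}ᶜ =
        {a : W | hausdorffContent α (f '' (π ⁻¹' {a} ∩ K)) < ((n : ℝ≥0∞) + 1)⁻¹} := by
      ext a; simp [not_le]
    rw [hcompl]
    exact hopen
  have hunion : {a : W | 0 < μH[α] (f '' (π ⁻¹' {a} ∩ K))} =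
      ⋃ n : ℕ, {a : W |
        ((n : ℝ≥0∞) + 1)⁻¹ ≤ hausdorffContent α (f '' (π ⁻¹' {a} ∩ K))} := by
    ext a
    simp only [Set.mem_setOf_eq, Set.mem_iUnion]
    constructor
    · intro h
      have hcne : hausdorffContent α (f '' (π ⁻¹' {a} ∩ K)) ≠ 0 := by
        intro h0
        exact h.ne' (hausdorffMeasure_eq_zero_of_content hα h0)
      obtain ⟨n, hn⟩ := ENNReal.exists_inv_nat_lt hcne
      refine ⟨n, le_trans ?_ hn.le⟩
      exact ENNReal.inv_le_inv' le_self_add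
    · rintro ⟨n, hn⟩
      exact (hcpos n).trans_le
        (hn.trans (hausdorffContent_le_hausdorffMeasure hα _))
  refine ⟨hclosed, hunion, fun n => {a : W |
      ((n : ℝ≥0∞) + 1)⁻¹ ≤ hausdorffContent α (f '' (π ⁻¹' {a} ∩ K))}, fun n => ?_, hunion⟩
  refine IsCompact.of_isClosed_subset (hK.image hπ) (hclosed n) ?_
  intro a ha
  by_contra hmem
  have hempty : π ⁻¹' {a} ∩ K = ∅ := by
    ext x
    simp only [Set.mem_inter_iff, Set.mem_preimage, Set.mem_singleton_iff,
      Set.mem_empty_iff_false, iff_false, not_and]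
    intro hxa hxK
    exact hmem ⟨x, hxK, hxa⟩
  have hzero : hausdorffContent α (f '' (π ⁻¹' {a} ∩ K)) = 0 := by
    refine le_antisymm ?_ zero_le
    refine le_trans (hausdorffContent_le (fun _ => (∅ : Set Y)) (by simp [hempty])) ?_
    simp [EMetric.diam, ENNReal.zero_rpow_of_pos hα]
  rw [Set.mem_setOf_eq, hzero] at ha
  exact absurd ha (not_le.2 (hcpos n))
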